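/- Let K ⊂ E be a set in a normed space that is invariant under a group of isometric translations (u ↦ u(·−y), y ∈ ℤ^d) and such that each orbit has a representative in a finite set 𝓗 of unit vectors, where distinct elements v, w of K with v ≠ w and in the same 'bounded shift' class have ‖v − w‖ equal to a fixed positive value, while for unbounded shifts w(·−z_n) ⇀ 0 weakly and hence ‖v − w(·−z_n)‖ ≥ ‖v‖ = 1 in the limit. Conclude: k := inf{‖v − w‖ : v, w ∈ K, v ≠ w} > 0. -/

import Mathlib

open Filter


section
variable {ι : Type*} [DecidableEq ι]

lemma my_summable_mul {f g : ι → ℝ}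
    (hf : Summable fun x => f x ^ 2) (hg : Summable fun x => g x ^ 2) :
    Summable fun x => |f x * g x| := by
  apply Summable.of_nonneg_of_le (fun x => abs_nonneg _) (fun x => ?_) ((hf.add hg).div_const 2)
  rw [abs_mul]
  calc |f x| * |g x| ≤ (|f x| ^ 2 + |g x| ^ 2) / 2 := by nlinarith [sq_nonneg (|f x| - |g x|)]
    _ = (f x ^ 2 + g x ^ 2) / 2 := by rw [sq_abs, sq_abs]

lemma my_tsum_CS {f g : ι → ℝ} (hf0 : ∀ x, 0 ≤ f x) (hg0 : ∀ x, 0 ≤ g x)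
    (hf : Summable fun x => f x ^ 2) (hg : Summable fun x => g x ^ 2) :
    ∑' x, f x * g x ≤ Real.sqrt (∑' x, f x ^ 2) * Real.sqrt (∑' x, g x ^ 2) := by
  have hs : Summable fun x => f x * g x := by
    have := my_summable_mul hf hg
    refine this.congr fun x => ?_
    rw [abs_mul, abs_of_nonneg (hf0 x), abs_of_nonneg (hg0 x)]
  refine Summable.tsum_le_of_sum_le hs fun s => ?_
  have h1 : (∑ i ∈ s, f i * g i) ^ 2 ≤ (∑ i ∈ s, f i ^ 2) * ∑ i ∈ s, g i ^ 2 :=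
    Finset.sum_mul_sq_le_sq_mul_sq s f g
  have h2 : ∑ i ∈ s, f i ^ 2 ≤ ∑' x, f x ^ 2 := Summable.sum_le_tsum s (fun i _ => sq_nonneg _) hf
  have h3 : ∑ i ∈ s, g i ^ 2 ≤ ∑' x, g x ^ 2 := Summable.sum_le_tsum s (fun i _ => sq_nonneg _) hg
  have h4 : 0 ≤ ∑ i ∈ s, f i * g i := Finset.sum_nonneg fun i _ => mul_nonneg (hf0 i) (hg0 i)
  rw [← Real.sqrt_mul_self h4, ← Real.sqrt_mul (tsum_nonneg fun x => sq_nonneg (f x))]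
  apply Real.sqrt_le_sqrt
  calc (∑ i ∈ s, f i * g i) * (∑ i ∈ s, f i * g i) = (∑ i ∈ s, f i * g i) ^ 2 := (sq _).symm
    _ ≤ (∑ i ∈ s, f i ^ 2) * ∑ i ∈ s, g i ^ 2 := h1
    _ ≤ _ := mul_le_mul h2 h3 (Finset.sum_nonneg fun i _ => sq_nonneg _)
          (tsum_nonneg fun x => sq_nonneg _)

lemma my_tail_small {h : ι → ℝ} (hnn : ∀ x, 0 ≤ h x) (hs : Summable h)
    {ε : ℝ} (hε : 0 < ε) : ∃ S : Finset ι, ∑' x, (if x ∈ S then 0 else h x) < ε := by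
  have hts : Tendsto (fun S : Finset ι => ∑ x ∈ S, h x) atTop (nhds (∑' x, h x)) := hs.hasSum
  have : ∀ᶠ S : Finset ι in atTop, ∑' x, h x - ε < ∑ x ∈ S, h x :=
    hts.eventually (eventually_gt_nhds (by linarith))
  obtain ⟨S, hS⟩ := this.exists
  refine ⟨S, ?_⟩
  have hsum1 : Summable fun x => if x ∈ S then h x else 0 :=
    Summable.of_nonneg_of_le (fun x => by split <;> simp [hnn x])
      (fun x => by split <;> simp [hnn x]) hs
  have key : ∑' x, (if x ∈ S then 0 else h x) = ∑' x, h x - ∑ x ∈ S, h x := by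
    have h2 : ∑' x, (if x ∈ S then h x else 0) = ∑ x ∈ S, h x := by
      rw [tsum_eq_sum (s := S) (fun x hx => by simp [hx])]
      exact Finset.sum_congr rfl fun x hx => by simp [hx]
    have h3 : (fun x => if x ∈ S then 0 else h x) = fun x => h x - (if x ∈ S then h x else 0) := by
      funext x; split <;> ring
    rw [h3, Summable.tsum_sub hs hsum1, h2]
  rw [key]; linarith

variable [AddCommGroup ι]

lemma my_summable_shift (b : ι → ℝ) (z : ι) (hb : Summable b) :
    Summable fun x => b (x - z) :=
  ((Equiv.subRight z).summable_iff (f := b)).2 hb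

lemma my_decay {a b : ι → ℝ}
    (ha : Summable fun x => a x ^ 2) (hb : Summable fun x => b x ^ 2) :
    Tendsto (fun z => ∑' x, a x * b (x - z)) cofinite (nhds 0) := by
  rw [Metric.tendsto_nhds]
  intro ε hε
  set A := Real.sqrt (∑' x, a x ^ 2) with hA
  set B := Real.sqrt (∑' x, b x ^ 2) with hB
  have hA0 : 0 ≤ A := Real.sqrt_nonneg _
  have hB0 : 0 ≤ B := Real.sqrt_nonneg _
  set δ := ε / (2 * (A + B + 1)) with hδdef
  have hδ : 0 < δ := by positivity
  obtain ⟨S, hS⟩ := my_tail_small (h := fun x => a x ^ 2) (fun x => sq_nonneg _) ha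
    (show (0:ℝ) < δ ^ 2 by positivity)
  obtain ⟨T, hT⟩ := my_tail_small (h := fun x => b x ^ 2) (fun x => sq_nonneg _) hb
    (show (0:ℝ) < δ ^ 2 by positivity)
  set F : Finset ι := Finset.image (fun p : ι × ι => p.1 - p.2) (S ×ˢ T) with hF
  rw [eventually_cofinite]
  apply Set.Finite.subset F.finite_toSet
  intro z hz
  simp only [Set.mem_setOf_eq, not_lt] at hz
  by_contra hzF
  apply absurd hz
  push_neg
  -- now show dist < ε for z ∉ F
  have hxz : ∀ x ∈ S, x - z ∉ T := by
    intro x hxS hxT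
    exact hzF (Finset.mem_coe.2 (Finset.mem_image.2 ⟨(x, x - z), Finset.mem_product.2 ⟨hxS, hxT⟩, sub_sub_cancel x z⟩))
  set c : ι → ℝ := fun x => b (x - z) with hc
  have hc2 : Summable fun x => c x ^ 2 := my_summable_shift (fun x => b x ^ 2) z hb
  have habs : Summable fun x => |a x * c x| := my_summable_mul ha hc2
  have hsum : Summable fun x => a x * c x := summable_abs_iff.1 habs
  rw [Real.dist_eq, sub_zero]
  -- split
  set g1 : ι → ℝ := fun x => if x ∈ S then |a x| * |c x| else 0 with hg1def
  set g2 : ι → ℝ := fun x => (if x ∈ S then 0 else |a x|) * |c x| with hg2def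
  have hsplit : ∀ x, |a x * c x| = g1 x + g2 x := by
    intro x
    simp only [hg1def, hg2def, abs_mul]
    split <;> ring
  have hnn1 : ∀ x, 0 ≤ g1 x := fun x => by
    simp only [hg1def]; split <;> positivity
  have hnn2 : ∀ x, 0 ≤ g2 x := fun x => by
    simp only [hg2def]
    exact mul_nonneg (by split <;> positivity) (abs_nonneg _)
  have hg1s : Summable g1 := Summable.of_nonneg_of_le hnn1
    (fun x => (le_add_of_nonneg_right (hnn2 x)).trans_eq (hsplit x).symm) habs
  have hg2s : Summable g2 := Summable.of_nonneg_of_le hnn2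
    (fun x => (le_add_of_nonneg_left (hnn1 x)).trans_eq (hsplit x).symm) habs
  have step1 : |∑' x, a x * c x| ≤ ∑' x, g1 x + ∑' x, g2 x := by
    calc |∑' x, a x * c x| ≤ ∑' x, |a x * c x| := by
          simpa only [Real.norm_eq_abs] using norm_tsum_le_tsum_norm (f := fun x => a x * c x)
            (habs.congr fun x => (Real.norm_eq_abs _).symm)
      _ = ∑' x, (g1 x + g2 x) := tsum_congr hsplit
      _ = ∑' x, g1 x + ∑' x, g2 x := Summable.tsum_add hg1s hg2s
  -- bound on sum over S of c^2
  have hcS : ∑ x ∈ S, c x ^ 2 ≤ δ ^ 2 := by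
    have hsummable : Summable fun x => if x - z ∈ T then 0 else b (x - z) ^ 2 :=
      my_summable_shift (fun y => if y ∈ T then 0 else b y ^ 2) z
        (Summable.of_nonneg_of_le (fun y => by split <;> simp [sq_nonneg (b y)])
          (fun y => by split <;> simp [sq_nonneg (b y)]) hb)
    calc ∑ x ∈ S, c x ^ 2 = ∑ x ∈ S, (if x - z ∈ T then 0 else b (x - z) ^ 2) :=
          Finset.sum_congr rfl fun x hx => by rw [if_neg (hxz x hx)]
      _ ≤ ∑' x, (if x - z ∈ T then 0 else b (x - z) ^ 2) :=
          Summable.sum_le_tsum S (fun x _ => by split <;> simp [sq_nonneg (b (x - z))]) hsummable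
      _ = ∑' y, (if y ∈ T then 0 else b y ^ 2) :=
          (Equiv.subRight z).tsum_eq (fun y => if y ∈ T then 0 else b y ^ 2)
      _ ≤ δ ^ 2 := le_of_lt hT
  -- bound term 1
  have hbd1 : ∑' x, g1 x ≤ A * δ := by
    have he : ∑' x, g1 x = ∑ x ∈ S, |a x| * |c x| := by
      rw [tsum_eq_sum (s := S) (fun x hx => by simp [hg1def, hx])]
      exact Finset.sum_congr rfl fun x hx => by simp [hg1def, hx]
    rw [he]
    have h1 : (∑ x ∈ S, |a x| * |c x|) ^ 2 ≤ (∑ x ∈ S, a x ^ 2) * ∑ x ∈ S, c x ^ 2 := by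
      have := Finset.sum_mul_sq_le_sq_mul_sq S (fun x => |a x|) (fun x => |c x|)
      simpa [sq_abs] using this
    have h2 : ∑ x ∈ S, a x ^ 2 ≤ A ^ 2 := by
      rw [hA, Real.sq_sqrt (tsum_nonneg fun x => sq_nonneg (a x))]
      exact Summable.sum_le_tsum S (fun x _ => sq_nonneg _) ha
    have h4 : 0 ≤ ∑ x ∈ S, |a x| * |c x| :=
      Finset.sum_nonneg fun x _ => mul_nonneg (abs_nonneg _) (abs_nonneg _)
    have hc0 : 0 ≤ ∑ x ∈ S, c x ^ 2 := Finset.sum_nonneg fun x _ => sq_nonneg _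
    have h5 : (∑ x ∈ S, |a x| * |c x|) ^ 2 ≤ (A * δ) ^ 2 := by
      calc (∑ x ∈ S, |a x| * |c x|) ^ 2 ≤ (∑ x ∈ S, a x ^ 2) * ∑ x ∈ S, c x ^ 2 := h1
        _ ≤ A ^ 2 * δ ^ 2 := mul_le_mul h2 hcS hc0 (sq_nonneg A)
        _ = (A * δ) ^ 2 := (mul_pow A δ 2).symm
    have h6 := Real.sqrt_le_sqrt h5
    rwa [Real.sqrt_sq h4, Real.sqrt_sq (mul_nonneg hA0 hδ.le)] at h6
  -- bound term 2
  have hbd2 : ∑' x, g2 x ≤ δ * B := by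
    have hf2 : Summable fun x => (if x ∈ S then 0 else |a x|) ^ 2 := by
      refine Summable.of_nonneg_of_le (fun x => sq_nonneg _) (fun x => ?_) ha
      split <;> simp [sq_abs, sq_nonneg (a x)]
    have hCS := my_tsum_CS (f := fun x => if x ∈ S then 0 else |a x|) (g := fun x => |c x|)
      (fun x => by show (0:ℝ) ≤ if x ∈ S then 0 else |a x|; split <;> positivity)
      (fun x => abs_nonneg _) hf2 (by simpa [sq_abs] using hc2)
    have he1 : ∑' x, (if x ∈ S then 0 else |a x|) ^ 2 = ∑' x, (if x ∈ S then 0 else a x ^ 2) :=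
      tsum_congr fun x => by split <;> simp [sq_abs]
    have he2 : ∑' x, |c x| ^ 2 = ∑' x, b x ^ 2 := by
      rw [tsum_congr (fun x => sq_abs (c x))]
      exact (Equiv.subRight z).tsum_eq (fun y => b y ^ 2)
    rw [he1, he2] at hCS
    refine le_trans hCS ?_
    rw [← hB]
    apply mul_le_mul_of_nonneg_right _ hB0
    calc Real.sqrt (∑' x, (if x ∈ S then 0 else a x ^ 2)) ≤ Real.sqrt (δ ^ 2) :=
          Real.sqrt_le_sqrt (le_of_lt hS)
      _ = δ := Real.sqrt_sq hδ.le
  calc |∑' x, a x * c x| ≤ A * δ + δ * B := step1.trans (add_le_add hbd1 hbd2)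
    _ < ε := by
        have : ε = δ * (2 * (A + B + 1)) := by rw [hδdef]; exact (div_mul_cancel₀ _ (by positivity)).symm
        nlinarith
end

section
variable {ι : Type*}

variable [DecidableEq ι]

lemma my_summable_mul' {f g : ι → ℝ}
    (hf : Summable fun x => f x ^ 2) (hg : Summable fun x => g x ^ 2) :
    Summable fun x => f x * g x := summable_abs_iff.1 (my_summable_mul hf hg)

lemma my_sq_summable {f g : ι → ℝ}
    (hf : Summable fun x => f x ^ 2) (hg : Summable fun x => g x ^ 2) :
    Summable fun x => (f x - g x) ^ 2 := by
  have h : (fun x => (f x - g x) ^ 2)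
      = fun x => (f x ^ 2 + g x ^ 2) - 2 * (f x * g x) := by
    funext x; ring
  rw [h]
  exact ((hf.add hg).sub ((my_summable_mul' hf hg).mul_left 2))

lemma my_expand {f g : ι → ℝ}
    (hf : Summable fun x => f x ^ 2) (hg : Summable fun x => g x ^ 2) :
    ∑' x, (f x - g x) ^ 2 = (∑' x, f x ^ 2) + (∑' x, g x ^ 2) - 2 * ∑' x, f x * g x := by
  have h : (fun x => (f x - g x) ^ 2)
      = fun x => (f x ^ 2 + g x ^ 2) - 2 * (f x * g x) := by
    funext x; ring
  rw [h, Summable.tsum_sub (hf.add hg) ((my_summable_mul' hf hg).mul_left 2),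
    Summable.tsum_add hf hg, tsum_mul_left]

lemma my_bad_finite [AddCommGroup ι] [DecidableEq ι] {a b : ι → ℝ}
    (ha : Summable fun x => a x ^ 2) (hb : Summable fun x => b x ^ 2)
    (ha1 : (∑' x, a x ^ 2) = 1) (hb1 : (∑' x, b x ^ 2) = 1) :
    {z : ι | ∑' x, (a x - b (x - z)) ^ 2 < 1}.Finite := by
  have hshift : ∀ z : ι, (Summable fun x => b (x - z) ^ 2) ∧ (∑' x, b (x - z) ^ 2) = 1 := by
    intro z
    refine ⟨my_summable_shift (fun y => b y ^ 2) z hb, ?_⟩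
    rw [← hb1]; exact (Equiv.subRight z).tsum_eq (fun y => b y ^ 2)
  have hNt : Tendsto (fun z : ι => ∑' x, (a x - b (x - z)) ^ 2) cofinite (nhds 2) := by
    have h1 : Tendsto (fun z : ι => 2 - 2 * ∑' x, a x * b (x - z)) cofinite (nhds 2) := by
      have := ((my_decay ha hb).const_mul (2:ℝ)).const_sub 2
      simpa using this
    refine h1.congr fun z => ?_
    rw [my_expand ha (hshift z).1, ha1, (hshift z).2]
    norm_num
  have hev : ∀ᶠ z : ι in cofinite, (1:ℝ) < ∑' x, (a x - b (x - z)) ^ 2 :=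
    hNt.eventually (eventually_gt_nhds one_lt_two)
  rw [eventually_cofinite] at hev
  refine hev.subset fun z hz => ?_
  simp only [Set.mem_setOf_eq, not_lt] at hz ⊢
  linarith
end

section
variable {ι : Type*} [AddCommGroup ι] [DecidableEq ι]

lemma my_pos {a c : (Fin d → ℤ) → ℝ} (ha : Summable fun x => a x ^ 2)
    (hc : Summable fun x => c x ^ 2) (hne : a ≠ c) :
    0 < ∑' x, (a x - c x) ^ 2 := by
  obtain ⟨x₀, hx₀⟩ : ∃ x, a x ≠ c x := by
    by_contra h
    push_neg at h
    exact hne (funext h)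
  have h1 : 0 < (a x₀ - c x₀) ^ 2 := by
    have : a x₀ - c x₀ ≠ 0 := sub_ne_zero_of_ne hx₀
    positivity
  have h2 : (a x₀ - c x₀) ^ 2 ≤ ∑' x, (a x - c x) ^ 2 :=
    Summable.le_tsum (my_sq_summable ha hc) x₀ (fun j _ => sq_nonneg _)
  linarith
end

/-- If the critical set `K ⊂ ℓ²(ℤ^d)` consists of the `ℤ^d`-translates of a finite
set `𝓗` of unit vectors, then the distances between distinct elements of `K` are
bounded below: `k = inf{‖v - w‖ : v, w ∈ K, v ≠ w} > 0`. -/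
theorem orbit_separation (d : ℕ) (hd : 1 ≤ d)
    (𝓗 : Finset ((Fin d → ℤ) → ℝ))
    (hmem : ∀ w ∈ 𝓗, Memℓp w 2)
    (hunit : ∀ w ∈ 𝓗, (∑' x : Fin d → ℤ, (w x) ^ 2) = 1)
    (K : Set ((Fin d → ℤ) → ℝ))
    (hK : K = {v | ∃ w ∈ 𝓗, ∃ y : Fin d → ℤ, v = fun x => w (x - y)}) :
    ∃ k > (0:ℝ), ∀ v ∈ K, ∀ w ∈ K, v ≠ w →
      k ≤ Real.sqrt (∑' x : Fin d → ℤ, (v x - w x) ^ 2) := by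
  classical
  -- summability of squares
  have hsum : ∀ a ∈ 𝓗, Summable fun x : (Fin d → ℤ) => a x ^ 2 := by
    intro a ha
    have h1 : Summable fun x : (Fin d → ℤ) => ‖a x‖ ^ (2:ENNReal).toReal :=
      (hmem a ha).summable (by norm_num)
    refine h1.congr fun x => ?_
    rw [show ((2:ENNReal)).toReal = (2:ℝ) by norm_num]
    rw [show ‖a x‖ ^ (2:ℝ) = ‖a x‖ ^ (2:ℕ) from Real.rpow_natCast _ 2]
    rw [Real.norm_eq_abs, sq_abs]
  set N : (((Fin d → ℤ) → ℝ)) → (((Fin d → ℤ) → ℝ)) → (Fin d → ℤ) → ℝ :=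
    fun a b z => ∑' x, (a x - b (x - z)) ^ 2 with hN
  -- the "bad" set
  set P : Set (((Fin d → ℤ) → ℝ) × ((Fin d → ℤ) → ℝ) × (Fin d → ℤ)) :=
    {t | t.1 ∈ 𝓗 ∧ t.2.1 ∈ 𝓗 ∧ N t.1 t.2.1 t.2.2 < 1 ∧
      t.1 ≠ fun x => t.2.1 (x - t.2.2)} with hP
  have hPfin : P.Finite := by
    have hU : P ⊆ ⋃ a ∈ (𝓗 : Set ((Fin d → ℤ) → ℝ)), ⋃ b ∈ (𝓗 : Set ((Fin d → ℤ) → ℝ)),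
        (fun z => (a, b, z)) '' {z | N a b z < 1} := by
      rintro ⟨a, b, z⟩ ⟨ha, hb, hlt, _⟩
      simp only [Set.mem_iUnion]
      exact ⟨a, ha, b, hb, ⟨z, hlt, rfl⟩⟩
    refine Set.Finite.subset ?_ hU
    refine Set.Finite.biUnion 𝓗.finite_toSet fun a ha => ?_
    refine Set.Finite.biUnion 𝓗.finite_toSet fun b hb => ?_
    exact (my_bad_finite (hsum a ha) (hsum b hb) (hunit a ha) (hunit b hb)).image _
  set V : Set ℝ := (fun t : ((Fin d → ℤ) → ℝ) × ((Fin d → ℤ) → ℝ) × (Fin d → ℤ) => Real.sqrt (N t.1 t.2.1 t.2.2)) '' P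
  have hVfin : V.Finite := hPfin.image _
  set Fk : Finset ℝ := insert (1:ℝ) hVfin.toFinset with hFk
  have hFkne : Fk.Nonempty := ⟨1, Finset.mem_insert_self _ _⟩
  refine ⟨Fk.min' hFkne, ?_, ?_⟩
  · -- positivity
    have hmem' := Fk.min'_mem hFkne
    rcases Finset.mem_insert.1 hmem' with h | h
    · rw [h]; norm_num
    · rw [Set.Finite.mem_toFinset] at h
      obtain ⟨⟨a, b, z⟩, ⟨ha, hb, hlt, hne⟩, hEq⟩ := h
      have hbz : Summable fun x : (Fin d → ℤ) => b (x - z) ^ 2 :=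
        my_summable_shift (fun y => b y ^ 2) z (hsum b hb)
      rw [← hEq]
      exact Real.sqrt_pos.2 (my_pos (hsum a ha) hbz hne)
  · rintro v hv w hw hvw
    rw [hK] at hv hw
    obtain ⟨a, ha, y₁, rfl⟩ := hv
    obtain ⟨b, hb, y₂, rfl⟩ := hw
    set z := y₂ - y₁ with hz
    have key : ∑' x : (Fin d → ℤ), ((fun x => a (x - y₁)) x - (fun x => b (x - y₂)) x) ^ 2 = N a b z := by
      have h1 : ∀ u : (Fin d → ℤ), (a (u + y₁ - y₁) - b (u + y₁ - y₂)) ^ 2 = (a u - b (u - z)) ^ 2 := by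
        intro u
        rw [add_sub_cancel_right, show u + y₁ - y₂ = u - (y₂ - y₁) by abel]
      calc ∑' x : (Fin d → ℤ), (a (x - y₁) - b (x - y₂)) ^ 2
          = ∑' u : (Fin d → ℤ), (a (u + y₁ - y₁) - b (u + y₁ - y₂)) ^ 2 :=
            ((Equiv.addRight y₁).tsum_eq (fun x => (a (x - y₁) - b (x - y₂)) ^ 2)).symm
        _ = ∑' u : (Fin d → ℤ), (a u - b (u - z)) ^ 2 := tsum_congr h1
        _ = N a b z := rfl
    have hne' : a ≠ fun x => b (x - z) := by
      intro h
      apply hvw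
      funext x
      show a (x - y₁) = b (x - y₂)
      rw [h]
      exact congrArg b (show x - y₁ - z = x - y₂ by rw [hz]; abel)
    rw [key]
    by_cases hlt : N a b z < 1
    · apply Finset.min'_le
      rw [hFk, Finset.mem_insert]
      right
      rw [Set.Finite.mem_toFinset]
      exact ⟨(a, b, z), ⟨ha, hb, hlt, hne'⟩, rfl⟩
    · push_neg at hlt
      calc Fk.min' hFkne ≤ 1 := Finset.min'_le _ _ (Finset.mem_insert_self _ _)
        _ ≤ Real.sqrt (N a b z) := by
            rw [show (1:ℝ) = Real.sqrt 1 by rw [Real.sqrt_one]]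
            exact Real.sqrt_le_sqrt hlt
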